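/- Let $l\ge 1$ be an integer, let $0\le\alpha<l$, let $r>0$, and let $s$ be a real number with $s>-\min(1,\,l-\alpha)$. Then $\int_{(0,r)^l} t_1^{\,s}\,|\mathbf{t}|^{-\alpha}\,d\mathbf{t} < \infty$, where $\mathbf{t}=(t_1,\dots,t_l)$ and $|\mathbf{t}|$ denotes the Euclidean norm. -/

import Mathlib

open MeasureTheory Real Filter Topology Set
open scoped ENNReal

noncomputable section

/-- The computation (3.6)-(3.7): for an integer `l ≥ 1`, `0 ≤ α < l`, `r > 0` and
`s > -min(1, l - α)`, the integral `∫_{(0,r)^l} t₁^s |t|^{-α} dt` is finite. -/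
theorem integral_t1_pow_weight_finite
    (l : ℕ) (hl : 1 ≤ l) (α : ℝ) (hα0 : 0 ≤ α) (hαl : α < l)
    (r : ℝ) (hr : 0 < r) (s : ℝ) (hs : -min 1 ((l : ℝ) - α) < s) :
    ∫⁻ t in Set.univ.pi (fun _ : Fin l => Set.Ioo (0 : ℝ) r),
      ENNReal.ofReal (t ⟨0, hl⟩ ^ s * Real.sqrt (∑ i, t i ^ 2) ^ (-α)) < ⊤ := by
  -- notation
  set i0 : Fin l := ⟨0, hl⟩ with hi0
  have hs1 : -1 < s := lt_of_le_of_lt (by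
    have : min 1 ((l : ℝ) - α) ≤ 1 := min_le_left _ _
    linarith) hs
  have hsla : α - l < s := lt_of_le_of_lt (by
    have : min 1 ((l : ℝ) - α) ≤ (l : ℝ) - α := min_le_right _ _
    linarith) hs
  -- choice of exponents
  set m : ℕ := l - 1 with hm
  have hmcast : (m : ℝ) = (l : ℝ) - 1 := by
    rw [hm, Nat.cast_sub hl, Nat.cast_one]
  set c : ℝ := max 0 ((α - s - 1) / m) with hc
  set γ : ℝ := min (α / m) ((c + 1) / 2) with hγ
  have hγ0 : 0 ≤ γ := by
    apply le_min
    · rcases Nat.eq_zero_or_pos m with h | h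
      · simp [h]
      · positivity
    · have : (0:ℝ) ≤ c := le_max_left _ _
      linarith
  set β : ℝ := α - m * γ with hβ
  have hβγ : β + m * γ = α := by ring
  have hβ0 : 0 ≤ β := by
    rcases Nat.eq_zero_or_pos m with h | h
    · simp [hβ, h]; linarith
    · have hm0 : (0:ℝ) < m := by exact_mod_cast h
      have h1 : γ ≤ α / m := min_le_left _ _
      have h2 : γ * m ≤ α := (le_div_iff₀ hm0).mp h1
      simp only [hβ]; nlinarith
  have hγ1 : γ < 1 := by
    have h88 : c < 1 := by
      rcases Nat.eq_zero_or_pos m with h | h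
      · simp [hc, h]
      · have hm0 : (0:ℝ) < m := by exact_mod_cast h
        have h1 : (α - s - 1) / m < 1 := by
          rw [div_lt_one hm0]
          rw [hmcast]; linarith
        simp only [hc, max_lt_iff]
        exact ⟨zero_lt_one, h1⟩
    calc γ ≤ (c + 1) / 2 := min_le_right _ _
      _ < 1 := by linarith
  have hβs : β < s + 1 := by
    rcases Nat.eq_zero_or_pos m with h0 | h0
    · -- m = 0, so l = 1, min 1 (l - α) = l - α (as α ≥ 0, α < l = 1)
      have hl1 : l = 1 := by omega
      have hlr : (l : ℝ) = 1 := by exact_mod_cast hl1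
      have : min 1 ((l : ℝ) - α) = (l : ℝ) - α := by
        apply min_eq_right; linarith
      rw [this] at hs
      simp only [hβ, h0, Nat.cast_zero, zero_mul, sub_zero]
      linarith
    · have hm0 : (0:ℝ) < m := by exact_mod_cast h0
      rcases le_or_gt ((c + 1) / 2) (α / m) with h | h
      · have hγeq : γ = (c + 1) / 2 := min_eq_right h
        have hcγ : c < γ := by
          rw [hγeq]
          have : (0:ℝ) ≤ c := le_max_left _ _
          linarith
        have h1 : (α - s - 1) / m ≤ c := le_max_right _ _
        have h2 : (α - s - 1) / m < γ := lt_of_le_of_lt h1 hcγ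
        have h3 := (div_lt_iff₀ hm0).mp h2
        simp only [hβ]; nlinarith
      · have hγeq : γ = α / m := min_eq_left h.le
        have : β = 0 := by
          simp only [hβ, hγeq]
          field_simp
          ring
        rw [this]; linarith
  -- the dominating exponents
  classical
  set e : Fin l → ℝ := fun i => if i = i0 then s - β else -γ with he
  have he_int : ∀ i, -1 < e i := by
    intro i
    by_cases h : i = i0 <;> simp [he, h] <;> linarith
  -- the dominating function
  set g : Fin l → ℝ → ℝ := fun i => (Set.Ioo (0:ℝ) r).indicator (fun x => x ^ e i) with hg
  have hg_int : ∀ i, Integrable (g i) := by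
    intro i
    rw [hg]
    rw [integrable_indicator_iff measurableSet_Ioo]
    exact (intervalIntegral.integrableOn_Ioo_rpow_iff hr).mpr (he_int i)
  have hg_meas : ∀ i, Measurable (g i) := by
    intro i
    exact (measurable_id.pow measurable_const).indicator measurableSet_Ioo
  set F : (Fin l → ℝ) → ℝ := fun t => ∏ i, g i (t i) with hF
  have hF_int : Integrable F := Integrable.fintype_prod (𝕜 := ℝ) hg_int
  have hF_meas : Measurable F :=
    Finset.measurable_prod _ fun i _ => (hg_meas i).comp (measurable_pi_apply i)
  -- pointwise bound on the set
  have key : ∀ t : Fin l → ℝ, t ∈ Set.univ.pi (fun _ : Fin l => Set.Ioo (0 : ℝ) r) →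
      ENNReal.ofReal (t i0 ^ s * Real.sqrt (∑ i, t i ^ 2) ^ (-α)) ≤ ENNReal.ofReal (F t) := by
    intro t ht
    rw [Set.mem_pi] at ht
    have htmem : ∀ i, t i ∈ Set.Ioo (0:ℝ) r := fun i => ht i (Set.mem_univ i)
    have htpos : ∀ i, 0 < t i := fun i => (htmem i).1
    set q : ℝ := Real.sqrt (∑ i, t i ^ 2) with hq
    have hqi : ∀ i, t i ≤ q := by
      intro i
      rw [hq]
      calc t i = Real.sqrt ((t i) ^ 2) := by rw [Real.sqrt_sq (htpos i).le]
        _ ≤ Real.sqrt (∑ j, t j ^ 2) := by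
            apply Real.sqrt_le_sqrt
            exact Finset.single_le_sum (fun j _ => sq_nonneg (t j)) (Finset.mem_univ i)
    have hqpos : 0 < q := lt_of_lt_of_le (htpos i0) (hqi i0)
    apply ENNReal.ofReal_le_ofReal
    -- rewrite F t
    have hFt : F t = t i0 ^ (s - β) * ∏ i ∈ Finset.univ.erase i0, t i ^ (-γ) := by
      rw [hF]
      simp only
      rw [← Finset.mul_prod_erase Finset.univ (fun i => g i (t i)) (Finset.mem_univ i0)]
      congr 1
      · rw [hg]; simp [Set.indicator_of_mem (htmem i0), he]
      · apply Finset.prod_congr rfl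
        intro i hi
        have hne : i ≠ i0 := (Finset.mem_erase.mp hi).1
        rw [hg]; simp [Set.indicator_of_mem (htmem i), he, hne]
    rw [hFt]
    have hcard : (Finset.univ.erase i0).card = m := by
      rw [Finset.card_erase_of_mem (Finset.mem_univ i0), Finset.card_univ, Fintype.card_fin]
    -- decompose q ^ (-α)
    have hqdecomp : q ^ (-α) = q ^ (-β) * (q ^ (-γ)) ^ m := by
      rw [← Real.rpow_natCast (q ^ (-γ)) m, ← Real.rpow_mul hqpos.le, ← Real.rpow_add hqpos]
      congr 1
      nlinarith [hβγ]
    have h1 : q ^ (-β) ≤ t i0 ^ (-β) :=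
      Real.rpow_le_rpow_of_nonpos (htpos i0) (hqi i0) (neg_nonpos.mpr hβ0)
    have h2 : (q ^ (-γ)) ^ m ≤ ∏ i ∈ Finset.univ.erase i0, t i ^ (-γ) := by
      rw [← hcard, ← Finset.prod_const]
      apply Finset.prod_le_prod
      · intro i _; exact Real.rpow_nonneg hqpos.le _
      · intro i _
        exact Real.rpow_le_rpow_of_nonpos (htpos i) (hqi i) (neg_nonpos.mpr hγ0)
    calc t i0 ^ s * q ^ (-α)
        = t i0 ^ s * (q ^ (-β) * (q ^ (-γ)) ^ m) := by rw [hqdecomp]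
      _ ≤ t i0 ^ s * (t i0 ^ (-β) * ∏ i ∈ Finset.univ.erase i0, t i ^ (-γ)) := by
          apply mul_le_mul_of_nonneg_left _ (Real.rpow_nonneg (htpos i0).le _)
          apply mul_le_mul h1 h2 (pow_nonneg (Real.rpow_nonneg hqpos.le _) _)
            (Real.rpow_nonneg (htpos i0).le _)
      _ = t i0 ^ (s - β) * ∏ i ∈ Finset.univ.erase i0, t i ^ (-γ) := by
          rw [← mul_assoc, ← Real.rpow_add (htpos i0), sub_eq_add_neg]
  -- conclude
  calc ∫⁻ t in Set.univ.pi (fun _ : Fin l => Set.Ioo (0 : ℝ) r),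
        ENNReal.ofReal (t i0 ^ s * Real.sqrt (∑ i, t i ^ 2) ^ (-α))
      ≤ ∫⁻ t in Set.univ.pi (fun _ : Fin l => Set.Ioo (0 : ℝ) r), ENNReal.ofReal (F t) := by
        apply setLIntegral_mono (hF_meas.ennreal_ofReal) key
    _ ≤ ∫⁻ t, ENNReal.ofReal (F t) := setLIntegral_le_lintegral _ _
    _ ≤ ∫⁻ t, ‖F t‖ₑ := lintegral_mono fun t => Real.ofReal_le_enorm _
    _ < ⊤ := hF_int.2
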